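/- Let T be a tree on n vertices and q a real number with |q| ≤ 1. Then the q-Laplacian L^q_T = I + q^2(D - I) - qA is positive semidefinite. -/

import Mathlib

open SimpleGraph Finset
namespace QLapAux
variable {n : ℕ} {G : SimpleGraph (Fin n)}

noncomputable def thePath (hG : G.IsTree) (v r : Fin n) : G.Walk v r :=
  (hG.existsUnique_path v r).choose
lemma thePath_isPath (hG : G.IsTree) (v r : Fin n) : (thePath hG v r).IsPath :=
  (hG.existsUnique_path v r).choose_spec.1
lemma path_unique (hG : G.IsTree) {v r : Fin n} (p : G.Walk v r) (hp : p.IsPath) :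
    p = thePath hG v r :=
  (hG.existsUnique_path v r).choose_spec.2 p hp
lemma length_thePath (hG : G.IsTree) (v r : Fin n) :
    (thePath hG v r).length = G.dist v r := by
  obtain ⟨p, hp, hlen⟩ := hG.isConnected.exists_path_of_dist v r
  rw [← path_unique hG p hp]; exact hlen
lemma dist_lt_of_mem_support (hG : G.IsTree) {v r u : Fin n}
    (h : u ∈ (thePath hG v r).support) (huv : u ≠ v) :
    G.dist u r < G.dist v r := by
  have hsplit := (thePath hG v r).take_spec h
  have hlen : ((thePath hG v r).takeUntil u h).length
      + ((thePath hG v r).dropUntil u h).length = G.dist v r := by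
    have := congrArg Walk.length hsplit
    rwa [Walk.length_append, length_thePath] at this
  have h1 : G.dist u r ≤ ((thePath hG v r).dropUntil u h).length := SimpleGraph.dist_le _
  have h2 : G.dist v r ≤ ((thePath hG v r).takeUntil u h).length + G.dist u r := by
    calc G.dist v r ≤ G.dist v u + G.dist u r := hG.isConnected.dist_triangle
      _ ≤ _ := by
        have := SimpleGraph.dist_le ((thePath hG v r).takeUntil u h); omega
  have h3 : ((thePath hG v r).takeUntil u h).length ≠ 0 := by
    intro h0
    exact huv (((thePath hG v r).takeUntil u h).eq_of_length_eq_zero h0).symm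
  omega

/-- Parent of `v` w.r.t. root `r`. -/
noncomputable def par (hG : G.IsTree) (r v : Fin n) : Fin n := (thePath hG v r).getVert 1

lemma par_adj (hG : G.IsTree) {r v : Fin n} (hv : v ≠ r) : G.Adj v (par hG r v) := by
  have hpos : 0 < (thePath hG v r).length := by
    rw [length_thePath]
    exact hG.isConnected.pos_dist_of_ne hv
  have := (thePath hG v r).adj_getVert_succ hpos
  simpa [Walk.getVert_zero, par] using this

lemma cons_isPath (hG : G.IsTree) {r v w : Fin n} (hadj : G.Adj v w)
    (hd : G.dist w r ≤ G.dist v r) : (Walk.cons hadj (thePath hG w r)).IsPath := by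
  rw [Walk.cons_isPath_iff]
  refine ⟨thePath_isPath _ _ _, fun hmem => ?_⟩
  rcases eq_or_ne v w with h | h
  · exact hadj.ne h
  · exact absurd (dist_lt_of_mem_support hG hmem h) (by omega)

lemma par_eq (hG : G.IsTree) {r v w : Fin n} (hadj : G.Adj v w)
    (hd : G.dist w r < G.dist v r) : par hG r v = w := by
  have hW := cons_isPath hG hadj hd.le
  have heq := path_unique hG _ hW
  rw [par, ← heq, Walk.getVert_cons_succ, Walk.getVert_zero]

lemma adj_dist_ne (hG : G.IsTree) {r v w : Fin n} (hadj : G.Adj v w) :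
    G.dist v r ≠ G.dist w r := by
  intro heq
  have hW := cons_isPath hG hadj heq.ge
  have hlen := congrArg Walk.length (path_unique hG _ hW)
  rw [Walk.length_cons, length_thePath, length_thePath] at hlen
  omega

lemma dist_le_adj (hG : G.IsTree) {r v w : Fin n} (hadj : G.Adj v w) :
    G.dist v r ≤ G.dist w r + 1 := by
  have := SimpleGraph.dist_le (Walk.cons hadj (thePath hG w r))
  rwa [Walk.length_cons, length_thePath] at this

lemma par_dist (hG : G.IsTree) {r v : Fin n} (hv : v ≠ r) :
    G.dist (par hG r v) r + 1 = G.dist v r := by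
  have hadj := par_adj hG hv
  have hmem : par hG r v ∈ (thePath hG v r).support := by
    rw [Walk.mem_support_iff_exists_getVert]
    refine ⟨1, rfl, ?_⟩
    rw [length_thePath]
    have := hG.isConnected.pos_dist_of_ne hv
    omega
  have h1 : G.dist (par hG r v) r < G.dist v r :=
    dist_lt_of_mem_support hG hmem hadj.ne'
  have h2 := dist_le_adj hG (r := r) hadj
  omega

lemma adj_iff (hG : G.IsTree) (r v w : Fin n) :
    G.Adj v w ↔ ((v ≠ r ∧ par hG r v = w) ∨ (w ≠ r ∧ par hG r w = v)) := by
  constructor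
  · intro hadj
    rcases (adj_dist_ne hG (r := r) hadj).lt_or_gt with h | h
    · refine Or.inr ⟨?_, par_eq hG hadj.symm h⟩
      intro hw; rw [hw, SimpleGraph.dist_self] at h; omega
    · refine Or.inl ⟨?_, par_eq hG hadj h⟩
      intro hv; rw [hv, SimpleGraph.dist_self] at h; omega
  · rintro (⟨hv, hp⟩ | ⟨hw, hp⟩)
    · exact hp ▸ par_adj hG hv
    · exact (hp ▸ par_adj hG hw).symm

lemma not_both (hG : G.IsTree) {r v w : Fin n}
    (h1 : v ≠ r ∧ par hG r v = w) (h2 : w ≠ r ∧ par hG r w = v) : False := by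
  have a1 := par_dist hG h1.1
  have a2 := par_dist hG h2.1
  rw [h1.2] at a1; rw [h2.2] at a2; omega

lemma adj_ite [DecidableRel G.Adj] (hG : G.IsTree) (r v w : Fin n) (c : ℝ) :
    (if G.Adj v w then c else 0) =
      (if v ≠ r ∧ par hG r v = w then c else 0)
        + (if w ≠ r ∧ par hG r w = v then c else 0) := by
  by_cases h1 : v ≠ r ∧ par hG r v = w <;> by_cases h2 : w ≠ r ∧ par hG r w = v
  · exact absurd (not_both hG h1 h2) (not_false)
  · simp [h1, h2, (adj_iff hG r v w).2 (Or.inl h1)]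
  · simp [h1, h2, (adj_iff hG r v w).2 (Or.inr h2)]
  · have : ¬ G.Adj v w := fun h => by
      rcases (adj_iff hG r v w).1 h with h' | h' <;> [exact h1 h'; exact h2 h']
    simp [h1, h2, this]

lemma degree_eq_sum [DecidableRel G.Adj] (v : Fin n) :
    (G.degree v : ℝ) = ∑ w, if G.Adj v w then (1 : ℝ) else 0 := by
  have : G.degree v = ∑ w, if G.Adj v w then 1 else 0 := by
    rw [← card_neighborFinset_eq_degree, neighborFinset_eq_filter, Finset.card_filter]
  rw [this]
  push_cast
  exact Finset.sum_congr rfl fun w _ => by split_ifs <;> simp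

end QLapAux

noncomputable def qLap {n : ℕ} (G : SimpleGraph (Fin n)) [DecidableRel G.Adj]
    {R : Type*} [CommRing R] (q : R) : Matrix (Fin n) (Fin n) R :=
  Matrix.of fun i j =>
    if i = j then 1 + q ^ 2 * ((G.degree i : R) - 1)
    else if G.Adj i j then -q else 0

/-- For a tree `T` and a real `q` with `|q| ≤ 1`, the `q`-Laplacian
`L^q_T = I + q²(D - I) - qA` is positive semidefinite. -/
theorem qLap_posSemidef {n : ℕ} (G : SimpleGraph (Fin n)) [DecidableRel G.Adj]
    (hG : G.IsTree) (q : ℝ) (hq : |q| ≤ 1) :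
    (qLap G q).PosSemidef := by
  have hne : Nonempty (Fin n) := hG.isConnected.nonempty
  obtain ⟨r⟩ := hne
  have hq2 : q ^ 2 ≤ 1 := by
    have h := abs_le.mp hq
    nlinarith [h.1, h.2]
  refine Matrix.PosSemidef.of_dotProduct_mulVec_nonneg ?_ ?_
  · show (qLap G q).conjTranspose = qLap G q
    ext i j
    simp only [Matrix.conjTranspose_apply, qLap, Matrix.of_apply, star_trivial]
    by_cases h : i = j
    · subst h; simp
    · rw [if_neg (Ne.symm h), if_neg h]
      by_cases hA : G.Adj i j
      · rw [if_pos hA, if_pos hA.symm]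
      · rw [if_neg hA, if_neg (fun h2 => hA h2.symm)]
  · intro x
    have hx : star x = x := by funext i; simp
    rw [hx]
    set P : Fin n → Fin n := QLapAux.par hG r with hP
    set c : Fin n → Fin n → ℝ := fun i j => q ^ 2 * x i ^ 2 - q * (x i * x j) with hc
    have collapse1 : ∀ (g : Fin n → Fin n → ℝ) (i : Fin n),
        ∑ j, (if i ≠ r ∧ P i = j then g i j else 0) = if i ≠ r then g i (P i) else 0 := by
      intro g i
      by_cases hi : i ≠ r
      · simp only [hi, ne_eq, not_false_eq_true, true_and, if_true]
        simpa using Finset.sum_ite_eq Finset.univ (P i) (g i)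
      · simp [hi]
    have collapse2 : ∀ (g : Fin n → Fin n → ℝ) (j : Fin n),
        ∑ i, (if j ≠ r ∧ P j = i then g i j else 0) = if j ≠ r then g (P j) j else 0 := by
      intro g j
      by_cases hj : j ≠ r
      · simp only [hj, ne_eq, not_false_eq_true, true_and, if_true]
        simpa using Finset.sum_ite_eq Finset.univ (P j) (fun i => g i j)
      · simp [hj]
    have key : dotProduct x ((qLap G q).mulVec x) =
        ∑ v, (if v = r then (1 - q ^ 2) * x r ^ 2 else (x v - q * x (P v)) ^ 2) := by
      calc dotProduct x ((qLap G q).mulVec x)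
          = ∑ i, ∑ j, x i * (qLap G q i j * x j) := by
            simp [dotProduct, Matrix.mulVec, Finset.mul_sum]
        _ = ∑ i, ((1 - q ^ 2) * x i ^ 2
              + ∑ j, (if G.Adj i j then c i j else 0)) := by
            refine Finset.sum_congr rfl fun i _ => ?_
            have entry : ∀ j, x i * (qLap G q i j * x j) =
                (if i = j then ((1 - q ^ 2) + q ^ 2 * (G.degree i : ℝ)) * x j ^ 2 else 0)
                  + (if G.Adj i j then -(q * (x i * x j)) else 0) := by
              intro j
              by_cases h : i = j
              · subst h
                have e1 : qLap G q i i = 1 + q ^ 2 * ((G.degree i : ℝ) - 1) := by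
                  simp [qLap]
                have e2 : (if G.Adj i i then -(q * (x i * x i)) else 0) = 0 :=
                  if_neg (G.irrefl)
                rw [e1, if_pos rfl, e2]; ring
              · simp only [qLap, Matrix.of_apply, if_neg h]
                split_ifs with h2
                · ring
                · ring
            have hdiag : ∑ j, (if i = j then ((1 - q ^ 2) + q ^ 2 * (G.degree i : ℝ)) * x j ^ 2 else 0)
                = ((1 - q ^ 2) + q ^ 2 * (G.degree i : ℝ)) * x i ^ 2 := by
              simpa using Finset.sum_ite_eq Finset.univ i
                (fun j => ((1 - q ^ 2) + q ^ 2 * (G.degree i : ℝ)) * x j ^ 2)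
            have hdeg : ((1 - q ^ 2) + q ^ 2 * (G.degree i : ℝ)) * x i ^ 2
                = (1 - q ^ 2) * x i ^ 2 + ∑ j, (if G.Adj i j then q ^ 2 * x i ^ 2 else 0) := by
              have h1 : ∑ j, (if G.Adj i j then q ^ 2 * x i ^ 2 else 0)
                  = (∑ j, if G.Adj i j then (1:ℝ) else 0) * (q ^ 2 * x i ^ 2) := by
                rw [Finset.sum_mul]
                exact Finset.sum_congr rfl fun j _ => by split_ifs <;> ring
              rw [h1, ← QLapAux.degree_eq_sum]
              ring
            rw [Finset.sum_congr rfl fun j _ => entry j, Finset.sum_add_distrib, hdiag, hdeg,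
              add_assoc, ← Finset.sum_add_distrib]
            congr 1
            refine Finset.sum_congr rfl fun j _ => ?_
            simp only [hc]
            split_ifs <;> ring
        _ = ∑ i, ((1 - q ^ 2) * x i ^ 2)
              + (∑ i, (if i ≠ r then c i (P i) else 0)
                + ∑ j, (if j ≠ r then c (P j) j else 0)) := by
            rw [Finset.sum_add_distrib]
            congr 1
            calc ∑ i, ∑ j, (if G.Adj i j then c i j else 0)
                = ∑ i, ∑ j, ((if i ≠ r ∧ P i = j then c i j else 0)
                    + (if j ≠ r ∧ P j = i then c i j else 0)) := by
                  refine Finset.sum_congr rfl fun i _ => Finset.sum_congr rfl fun j _ => ?_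
                  rw [hP]
                  exact QLapAux.adj_ite hG r i j (c i j)
              _ = ∑ i, (∑ j, (if i ≠ r ∧ P i = j then c i j else 0))
                    + ∑ i, (∑ j, (if j ≠ r ∧ P j = i then c i j else 0)) := by
                  rw [← Finset.sum_add_distrib]
                  exact Finset.sum_congr rfl fun i _ => Finset.sum_add_distrib
              _ = ∑ i, (if i ≠ r then c i (P i) else 0)
                    + ∑ j, (if j ≠ r then c (P j) j else 0) := by
                  congr 1
                  · exact Finset.sum_congr rfl fun i _ => collapse1 c i
                  · rw [Finset.sum_comm]
                    exact Finset.sum_congr rfl fun j _ => collapse2 c j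
        _ = ∑ v, (if v = r then (1 - q ^ 2) * x r ^ 2 else (x v - q * x (P v)) ^ 2) := by
            rw [← Finset.sum_add_distrib, ← Finset.sum_add_distrib]
            refine Finset.sum_congr rfl fun v _ => ?_
            by_cases hv : v = r
            · subst hv; simp
            · simp only [hv, hc, ne_eq, not_false_eq_true, if_true, ite_false,
                if_neg hv, if_pos (show v ≠ r from hv)]
              ring
    rw [key]
    refine Finset.sum_nonneg fun v _ => ?_
    by_cases hv : v = r
    · simp only [hv, if_pos rfl]
      have h1 : (0:ℝ) ≤ 1 - q ^ 2 := by linarith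
      positivity
    · simp only [if_neg hv]
      positivity
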